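/- The weight spectrum of RM(m-2,m) (for m ≥ 2) is the set of all even integers in [0, 2^m] except 2 and 2^m − 2. -/

import Mathlib

open MvPolynomial Pointwise

/-- The binary Reed-Muller code of order `r` in `m` variables, viewed as the set of
Boolean functions represented by polynomials of total degree at most `r`. -/
def RM (r m : ℕ) : Set ((Fin m → ZMod 2) → ZMod 2) :=
  {f | ∃ p : MvPolynomial (Fin m) (ZMod 2), p.totalDegree ≤ r ∧ ∀ x, eval x p = f x}

/-- Hamming weight of a Boolean function: number of inputs where it is nonzero. -/
def wt {m : ℕ} (f : (Fin m → ZMod 2) → ZMod 2) : ℕ :=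
  Fintype.card {x // f x ≠ 0}

/-- Weight spectrum of `RM(r,m)`. -/
def spec (r m : ℕ) : Set ℕ := {w | ∃ f ∈ RM r m, wt f = w}


open Finset

lemma zmod2_cases (a : ZMod 2) : a = 0 ∨ a = 1 := by revert a; decide

lemma zmod2_ne_zero {a : ZMod 2} (h : a ≠ 0) : a = 1 := by revert h; revert a; decide

lemma sum_eval_eq_zero' {m : ℕ} (p : MvPolynomial (Fin m) (ZMod 2))
    (hp : p.totalDegree < m) : ∑ x : Fin m → ZMod 2, eval x p = 0 := by
  conv_lhs => rw [p.as_sum]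
  simp only [map_sum]
  rw [Finset.sum_comm]
  refine Finset.sum_eq_zero fun v hv => ?_
  -- there is a coordinate with v i = 0
  have hvd : v.sum (fun _ e => e) ≤ p.totalDegree := le_totalDegree hv
  have hex : ∃ i, v i = 0 := by
    by_contra h
    push_neg at h
    have : m ≤ v.sum fun _ e => e := by
      rw [Finsupp.sum_fintype]
      · calc m = ∑ _i : Fin m, 1 := by simp
          _ ≤ ∑ i, v i := Finset.sum_le_sum fun i _ => Nat.one_le_iff_ne_zero.mpr (h i)
      · intro; rfl
    omega
  obtain ⟨i0, hi0⟩ := hex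
  refine Finset.sum_ninvolution (fun x => Function.update x i0 (x i0 + 1)) ?_ ?_ ?_ ?_
  · intro x
    have : eval (Function.update x i0 (x i0 + 1)) (monomial v (coeff v p))
        = eval x (monomial v (coeff v p)) := by
      simp only [eval_monomial]
      congr 1
      refine Finsupp.prod_congr fun i hi => ?_
      have : i ≠ i0 := fun h => by
        subst h; exact absurd hi0 (Finsupp.mem_support_iff.mp hi)
      rw [Function.update_of_ne this]
    rw [this, CharTwo.add_self_eq_zero]
  · intro x _
    intro h
    have := congrFun h i0
    simp at this
  · intro x; exact Finset.mem_univ _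
  · intro x
    ext i
    by_cases h : i = i0 <;> simp [h, Function.update, add_assoc, CharTwo.add_self_eq_zero]


lemma zmod2_add_eq_zero {a b : ZMod 2} (h : a + b = 0) : a = b := by revert h; revert a b; decide

lemma zmod2_one_add_ne {a : ZMod 2} : 1 + a ≠ 0 ↔ a = 0 := by revert a; decide

lemma wt_eq_card_filter {m : ℕ} (f : (Fin m → ZMod 2) → ZMod 2) :
    wt f = (univ.filter fun x => f x ≠ 0).card := Fintype.card_subtype _

lemma sum_eq_sum_filter {m : ℕ} (f : (Fin m → ZMod 2) → ZMod 2)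
    (g : (Fin m → ZMod 2) → ZMod 2) (hg : ∀ x, f x = 0 → g x = 0) :
    ∑ x, g x = ∑ x ∈ univ.filter (fun x => f x ≠ 0), g x := by
  rw [Finset.sum_filter_of_ne]
  intro x _ hgx
  intro hfx
  exact hgx (hg x hfx)

lemma cast_wt {m : ℕ} (f : (Fin m → ZMod 2) → ZMod 2) :
    (wt f : ZMod 2) = ∑ x, f x := by
  rw [wt_eq_card_filter, sum_eq_sum_filter f f (fun x h => h)]
  rw [Finset.sum_congr rfl (fun x hx => zmod2_ne_zero (Finset.mem_filter.mp hx).2)]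
  simp

lemma RM_sum_zero {m : ℕ} (hm : 2 ≤ m) {f : (Fin m → ZMod 2) → ZMod 2}
    (hf : f ∈ RM (m - 2) m) : ∑ x, f x = 0 := by
  obtain ⟨p, hdeg, heval⟩ := hf
  rw [← Finset.sum_congr rfl (fun x _ => heval x)]
  exact sum_eval_eq_zero' p (by omega)

lemma RM_sum_coord_zero {m : ℕ} (hm : 2 ≤ m) {f : (Fin m → ZMod 2) → ZMod 2}
    (hf : f ∈ RM (m - 2) m) (j : Fin m) : ∑ x, f x * x j = 0 := by
  obtain ⟨p, hdeg, heval⟩ := hf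
  have : ∀ x : Fin m → ZMod 2, eval x (p * X j) = f x * x j := by
    intro x; simp [heval x]
  rw [← Finset.sum_congr rfl (fun x _ => this x)]
  refine sum_eval_eq_zero' _ (lt_of_le_of_lt (totalDegree_mul _ _) ?_)
  have : (X j : MvPolynomial (Fin m) (ZMod 2)).totalDegree = 1 := totalDegree_X _
  omega

lemma wt_even {m : ℕ} (hm : 2 ≤ m) {f : (Fin m → ZMod 2) → ZMod 2}
    (hf : f ∈ RM (m - 2) m) : Even (wt f) := by
  have h := RM_sum_zero hm hf
  rw [← cast_wt] at h
  rw [ZMod.natCast_eq_zero_iff] at h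
  exact (even_iff_two_dvd).mpr h

lemma wt_le {m : ℕ} (f : (Fin m → ZMod 2) → ZMod 2) : wt f ≤ 2 ^ m := by
  calc wt f ≤ Fintype.card (Fin m → ZMod 2) := Fintype.card_subtype_le _
    _ = 2 ^ m := by simp [Fintype.card_fun]

lemma wt_ne_two {m : ℕ} (hm : 2 ≤ m) {f : (Fin m → ZMod 2) → ZMod 2}
    (hf : f ∈ RM (m - 2) m) : wt f ≠ 2 := by
  intro h2
  rw [wt_eq_card_filter] at h2
  obtain ⟨a, b, hab, hs⟩ := Finset.card_eq_two.mp h2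
  have ha : f a = 1 := by
    have : a ∈ univ.filter fun x => f x ≠ 0 := by rw [hs]; simp
    exact zmod2_ne_zero (Finset.mem_filter.mp this).2
  have hb : f b = 1 := by
    have : b ∈ univ.filter fun x => f x ≠ 0 := by rw [hs]; simp
    exact zmod2_ne_zero (Finset.mem_filter.mp this).2
  apply hab
  funext j
  have h := RM_sum_coord_zero hm hf j
  rw [sum_eq_sum_filter f (fun x => f x * x j) (fun x hx => by show f x * x j = 0; rw [hx, zero_mul]), hs,
    Finset.sum_pair hab, ha, hb, one_mul, one_mul] at h
  exact zmod2_add_eq_zero h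

lemma one_add_mem_RM {m : ℕ} (hm : 2 ≤ m) {f : (Fin m → ZMod 2) → ZMod 2}
    (hf : f ∈ RM (m - 2) m) : (fun x => 1 + f x) ∈ RM (m - 2) m := by
  obtain ⟨p, hdeg, heval⟩ := hf
  refine ⟨C 1 + p, ?_, fun x => by simp [heval x]⟩
  refine le_trans (totalDegree_add _ _) ?_
  simp only [totalDegree_C]
  omega

lemma wt_one_add {m : ℕ} (f : (Fin m → ZMod 2) → ZMod 2) :
    wt (fun x => 1 + f x) = 2 ^ m - wt f := by
  have h1 : wt (fun x => 1 + f x) = Fintype.card {x // ¬ f x ≠ 0} := by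
    unfold wt
    refine Fintype.card_congr (Equiv.subtypeEquivRight fun x => ?_)
    show 1 + f x ≠ 0 ↔ ¬ f x ≠ 0
    simp [zmod2_one_add_ne]
  rw [h1, Fintype.card_subtype_compl]
  unfold wt
  congr 1
  simp [Fintype.card_fun]

lemma wt_ne {m : ℕ} (hm : 2 ≤ m) {f : (Fin m → ZMod 2) → ZMod 2}
    (hf : f ∈ RM (m - 2) m) : wt f ≠ 2 ∧ wt f ≠ 2 ^ m - 2 := by
  refine ⟨wt_ne_two hm hf, fun h => ?_⟩
  have h4 : 4 ≤ 2 ^ m := by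
    calc (4:ℕ) = 2^2 := rfl
    _ ≤ 2^m := Nat.pow_le_pow_right (by norm_num) hm
  have := wt_ne_two hm (one_add_mem_RM hm hf)
  rw [wt_one_add, h] at this
  omega

lemma zmod2_xor {a b : ZMod 2} (h : a ≠ b) : a + b = 1 := by revert h; revert a b; decide

lemma mem_RM_of_checks {m : ℕ} (hm : 2 ≤ m) (f : (Fin m → ZMod 2) → ZMod 2)
    (h0 : ∑ x, f x = 0) (h1 : ∀ j : Fin m, ∑ x, f x * x j = 0) : f ∈ RM (m - 2) m := by
  set P : MvPolynomial (Fin m) (ZMod 2) :=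
    ∑ a : Fin m → ZMod 2, C (f a) * ∏ i : Fin m, (X i + C (a i + 1)) with hPdef
  have heval : ∀ x, eval x P = f x := by
    intro x
    have hN : ∀ a : Fin m → ZMod 2,
        eval x (∏ i : Fin m, (X i + C (a i + 1))) = if a = x then 1 else 0 := by
      intro a
      by_cases hax : a = x
      · subst hax
        rw [if_pos rfl, map_prod]
        refine Finset.prod_eq_one fun i _ => ?_
        simp only [map_add, eval_X, eval_C]
        rw [← add_assoc, CharTwo.add_self_eq_zero, zero_add]
      · rw [if_neg hax, map_prod]
        obtain ⟨i, hi⟩ : ∃ i, x i ≠ a i := by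
          by_contra h
          push_neg at h
          exact hax (funext fun i => (h i).symm)
        refine Finset.prod_eq_zero (Finset.mem_univ i) ?_
        simp only [map_add, eval_X, eval_C]
        rw [← add_assoc, zmod2_xor hi]
        decide
    rw [hPdef, map_sum]
    simp only [map_mul, eval_C, hN]
    rw [Finset.sum_eq_single x (fun a _ has => by rw [if_neg has, mul_zero])
      (fun h => absurd (Finset.mem_univ x) h)]
    rw [if_pos rfl, mul_one]
  refine ⟨P, ?_, heval⟩
  have hP2 : P = ∑ T ∈ (univ : Finset (Fin m)).powerset,
      (∏ i ∈ T, X i) * C (∑ a : Fin m → ZMod 2, f a * ∏ i ∈ univ \ T, (a i + 1)) := by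
    rw [hPdef]
    have hexp : ∀ a : Fin m → ZMod 2, (∏ i : Fin m, (X i + C (a i + 1)))
        = ∑ T ∈ (univ : Finset (Fin m)).powerset,
          (∏ i ∈ T, (X i : MvPolynomial (Fin m) (ZMod 2))) * ∏ i ∈ univ \ T, C (a i + 1) := by
      intro a
      exact Finset.prod_add _ _ _
    simp only [hexp, Finset.mul_sum]
    rw [Finset.sum_comm]
    refine Finset.sum_congr rfl fun T _ => ?_
    rw [map_sum, Finset.mul_sum]
    refine Finset.sum_congr rfl fun a _ => ?_
    simp only [map_mul, map_prod]
    ring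
  rw [hP2]
  refine le_trans (totalDegree_finset_sum _ _) (Finset.sup_le fun T hT => ?_)
  by_cases hc : T.card ≤ m - 2
  · refine le_trans (totalDegree_mul _ _) ?_
    rw [totalDegree_C, add_zero]
    refine le_trans (totalDegree_finset_prod _ _) (le_trans (le_of_eq ?_) hc)
    rw [Finset.sum_congr rfl fun i _ => totalDegree_X (R := ZMod 2) i]
    simp
  · have hTsub : T ⊆ univ := Finset.mem_powerset.mp hT
    have hTle : T.card ≤ m := by
      have := Finset.card_le_card hTsub
      simpa using this
    have hconst : (∑ a : Fin m → ZMod 2, f a * ∏ i ∈ univ \ T, (a i + 1)) = 0 := by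
      rcases eq_or_lt_of_le hTle with heq | hlt
      · have : T = univ := Finset.eq_univ_of_card T (by simpa using heq)
        subst this
        rw [Finset.sdiff_self]
        simp only [Finset.prod_empty, mul_one]
        exact h0
      · have hcard : (univ \ T).card = 1 := by
          rw [Finset.card_sdiff_of_subset hTsub]
          have : (univ : Finset (Fin m)).card = m := by simp
          omega
        obtain ⟨j, hj⟩ := Finset.card_eq_one.mp hcard
        rw [hj]
        simp only [Finset.prod_singleton, mul_add, mul_one]
        rw [Finset.sum_add_distrib, h1 j, h0, add_zero]
    rw [hconst, map_zero, mul_zero, totalDegree_zero]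
    exact Nat.zero_le _

section blocks

variable {m : ℕ} (i0 i1 : Fin m)

/-- clear coordinates `i0, i1` -/
def proj (x : Fin m → ZMod 2) : Fin m → ZMod 2 :=
  fun i => if i = i0 ∨ i = i1 then 0 else x i

/-- the point of the block of `z` with coordinates `a, b` at `i0, i1` -/
def pt (z : Fin m → ZMod 2) (a b : ZMod 2) : Fin m → ZMod 2 :=
  fun i => if i = i0 then a else if i = i1 then b else z i

/-- blocks are indexed by their base points -/
def Blk : Finset (Fin m → ZMod 2) :=
  univ.filter (fun z => z i0 = 0 ∧ z i1 = 0)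

def blk (z : Fin m → ZMod 2) : Finset (Fin m → ZMod 2) :=
  {pt i0 i1 z 0 0, pt i0 i1 z 0 1, pt i0 i1 z 1 0, pt i0 i1 z 1 1}

lemma pt_apply_i0 (z : Fin m → ZMod 2) (a b : ZMod 2) : pt i0 i1 z a b i0 = a := by
  simp [pt]

lemma pt_apply_i1 (h01 : i0 ≠ i1) (z : Fin m → ZMod 2) (a b : ZMod 2) :
    pt i0 i1 z a b i1 = b := by
  simp [pt, Ne.symm h01]

lemma pt_apply_other (z : Fin m → ZMod 2) (a b : ZMod 2) {i : Fin m} (h0 : i ≠ i0) (h1 : i ≠ i1) :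
    pt i0 i1 z a b i = z i := by
  simp [pt, h0, h1]

lemma proj_pt {z : Fin m → ZMod 2} (hz : z ∈ Blk i0 i1) (a b : ZMod 2) :
    proj i0 i1 (pt i0 i1 z a b) = z := by
  rw [Blk, Finset.mem_filter] at hz
  funext i
  by_cases h0 : i = i0
  · subst h0; simp [proj, hz.2.1.symm]
  · by_cases h1 : i = i1
    · subst h1; simp [proj, hz.2.2.symm]
    · rw [proj]
      simp only [h0, h1, or_self, if_false]
      exact pt_apply_other i0 i1 z a b h0 h1

lemma pt_ne (h01 : i0 ≠ i1) (z : Fin m → ZMod 2) {a b a' b' : ZMod 2} (h : a ≠ a' ∨ b ≠ b') :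
    pt i0 i1 z a b ≠ pt i0 i1 z a' b' := by
  intro heq
  rcases h with h | h
  · exact h (by rw [← pt_apply_i0 i0 i1 z a b, heq, pt_apply_i0])
  · exact h (by rw [← pt_apply_i1 i0 i1 h01 z a b, heq, pt_apply_i1 i0 i1 h01])

lemma zmod2_cases' (a : ZMod 2) : a = 0 ∨ a = 1 := by revert a; decide

lemma card_blk (h01 : i0 ≠ i1) (z : Fin m → ZMod 2) : (blk i0 i1 z).card = 4 := by
  rw [blk]
  rw [Finset.card_insert_of_notMem, Finset.card_insert_of_notMem,
    Finset.card_insert_of_notMem, Finset.card_singleton]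
  · simp only [Finset.mem_singleton]
    exact pt_ne i0 i1 h01 z (Or.inr (by decide))
  · simp only [Finset.mem_insert, Finset.mem_singleton]
    push_neg
    exact ⟨pt_ne i0 i1 h01 z (Or.inl (by decide)), pt_ne i0 i1 h01 z (Or.inl (by decide))⟩
  · simp only [Finset.mem_insert, Finset.mem_singleton]
    push_neg
    refine ⟨pt_ne i0 i1 h01 z (Or.inr (by decide)), pt_ne i0 i1 h01 z (Or.inl (by decide)),
      pt_ne i0 i1 h01 z (Or.inl (by decide))⟩

lemma sum_blk (h01 : i0 ≠ i1) (z : Fin m → ZMod 2) : ∑ x ∈ blk i0 i1 z, x = 0 := by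
  rw [blk, Finset.sum_insert, Finset.sum_insert, Finset.sum_insert, Finset.sum_singleton]
  · funext i
    simp only [Pi.add_apply, Pi.zero_apply]
    by_cases h0 : i = i0
    · subst h0
      simp only [pt_apply_i0]
      rfl
    · by_cases h1 : i = i1
      · rw [h1]
        simp only [pt_apply_i1 i0 i1 h01]
        rfl
      · simp only [pt_apply_other i0 i1 _ _ _ h0 h1]
        rw [← add_assoc, ← add_assoc, CharTwo.add_self_eq_zero, zero_add,
          CharTwo.add_self_eq_zero]
  · simp only [Finset.mem_singleton]
    exact pt_ne i0 i1 h01 z (Or.inr (by decide))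
  · simp only [Finset.mem_insert, Finset.mem_singleton]
    push_neg
    exact ⟨pt_ne i0 i1 h01 z (Or.inl (by decide)), pt_ne i0 i1 h01 z (Or.inl (by decide))⟩
  · simp only [Finset.mem_insert, Finset.mem_singleton]
    push_neg
    refine ⟨pt_ne i0 i1 h01 z (Or.inr (by decide)), pt_ne i0 i1 h01 z (Or.inl (by decide)),
      pt_ne i0 i1 h01 z (Or.inl (by decide))⟩

lemma biUnion_disjoint {Z : Finset (Fin m → ZMod 2)} {F : (Fin m → ZMod 2) → Finset (Fin m → ZMod 2)}
    (hfib : ∀ z ∈ Z, ∀ x ∈ F z, proj i0 i1 x = z) :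
    ∀ z ∈ Z, ∀ z' ∈ Z, z ≠ z' → Disjoint (F z) (F z') := by
  intro z hz z' hz' hne
  rw [Finset.disjoint_left]
  intro x hx hx'
  exact hne ((hfib z hz x hx).symm.trans (hfib z' hz' x hx'))

lemma card_biUnion_fib {Z : Finset (Fin m → ZMod 2)}
    {F : (Fin m → ZMod 2) → Finset (Fin m → ZMod 2)}
    (hfib : ∀ z ∈ Z, ∀ x ∈ F z, proj i0 i1 x = z) :
    (Z.biUnion F).card = ∑ z ∈ Z, (F z).card :=
  Finset.card_biUnion (biUnion_disjoint i0 i1 hfib)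

lemma sum_biUnion_fib {Z : Finset (Fin m → ZMod 2)}
    {F : (Fin m → ZMod 2) → Finset (Fin m → ZMod 2)}
    (hfib : ∀ z ∈ Z, ∀ x ∈ F z, proj i0 i1 x = z) :
    ∑ x ∈ Z.biUnion F, x = ∑ z ∈ Z, ∑ x ∈ F z, x :=
  Finset.sum_biUnion (biUnion_disjoint i0 i1 hfib)

lemma blk_fib {z : Fin m → ZMod 2} (hz : z ∈ Blk i0 i1) :
    ∀ x ∈ blk i0 i1 z, proj i0 i1 x = z := by
  intro x hx
  rw [blk] at hx
  simp only [Finset.mem_insert, Finset.mem_singleton] at hx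
  rcases hx with h | h | h | h <;> (subst h; exact proj_pt i0 i1 hz _ _)

lemma univ_eq_biUnion (h01 : i0 ≠ i1) :
    (univ : Finset (Fin m → ZMod 2)) = (Blk i0 i1).biUnion (blk i0 i1) := by
  ext x
  simp only [Finset.mem_univ, true_iff, Finset.mem_biUnion]
  refine ⟨proj i0 i1 x, ?_, ?_⟩
  · rw [Blk, Finset.mem_filter]
    refine ⟨Finset.mem_univ _, by simp [proj], by simp [proj]⟩
  · have hx : x = pt i0 i1 (proj i0 i1 x) (x i0) (x i1) := by
      funext i
      by_cases h0 : i = i0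
      · subst h0; rw [pt_apply_i0]
      · by_cases h1 : i = i1
        · rw [h1, pt_apply_i1 i0 i1 h01]
        · rw [pt_apply_other i0 i1 _ _ _ h0 h1, proj]
          simp [h0, h1]
    have h2 : ∀ a b : ZMod 2, pt i0 i1 (proj i0 i1 x) a b ∈ blk i0 i1 (proj i0 i1 x) := by
      intro a b
      rw [blk]
      simp only [Finset.mem_insert, Finset.mem_singleton]
      rcases zmod2_cases' a with ha | ha <;>
        rcases zmod2_cases' b with hb | hb <;> subst ha <;> subst hb <;> tauto
    have := h2 (x i0) (x i1)
    rwa [← hx] at this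

lemma card_Blk (hm : 2 ≤ m) (h01 : i0 ≠ i1) : (Blk i0 i1).card = 2 ^ (m - 2) := by
  have h1 : Fintype.card (Fin m → ZMod 2) = 2 ^ m := by simp [Fintype.card_fun]
  have h2 : (univ : Finset (Fin m → ZMod 2)).card = 2 ^ m := by
    rw [Finset.card_univ, h1]
  rw [univ_eq_biUnion i0 i1 h01, card_biUnion_fib i0 i1 (fun z hz => blk_fib i0 i1 hz)] at h2
  rw [Finset.sum_congr rfl (fun z _ => card_blk i0 i1 h01 z), Finset.sum_const, smul_eq_mul] at h2
  have h3 : 2 ^ m = 2 ^ (m - 2) * 4 := by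
    have : m - 2 + 2 = m := by omega
    rw [← this, pow_add]
    norm_num
  omega

end blocks

section construction

variable {m : ℕ} (i0 i1 : Fin m)

lemma sum_pair_pt (h01 : i0 ≠ i1) (z : Fin m → ZMod 2) {a b : ZMod 2} (hab : a ≠ 0 ∨ b ≠ 0) :
    ∑ x ∈ ({pt i0 i1 z 0 0, pt i0 i1 z a b} : Finset (Fin m → ZMod 2)), x
      = pt i0 i1 0 a b := by
  have hne : pt i0 i1 z 0 0 ≠ pt i0 i1 z a b := by
    refine pt_ne i0 i1 h01 z ?_
    rcases hab with h | h
    · exact Or.inl (Ne.symm h)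
    · exact Or.inr (Ne.symm h)
  rw [Finset.sum_pair hne]
  funext i
  simp only [Pi.add_apply]
  by_cases h0 : i = i0
  · rw [h0]
    simp only [pt_apply_i0, zero_add]
  · by_cases h1 : i = i1
    · rw [h1]
      simp only [pt_apply_i1 i0 i1 h01, zero_add]
    · simp only [pt_apply_other i0 i1 _ _ _ h0 h1, CharTwo.add_self_eq_zero, Pi.zero_apply]

lemma card_pair_pt (h01 : i0 ≠ i1) (z : Fin m → ZMod 2) {a b : ZMod 2} (hab : a ≠ 0 ∨ b ≠ 0) :
    ({pt i0 i1 z 0 0, pt i0 i1 z a b} : Finset (Fin m → ZMod 2)).card = 2 := by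
  have hne : pt i0 i1 z 0 0 ≠ pt i0 i1 z a b := by
    refine pt_ne i0 i1 h01 z ?_
    rcases hab with h | h
    · exact Or.inl (Ne.symm h)
    · exact Or.inr (Ne.symm h)
  rw [Finset.card_insert_of_notMem (by simpa using hne), Finset.card_singleton]

lemma three_delta (h01 : i0 ≠ i1) :
    pt i0 i1 (0 : Fin m → ZMod 2) 0 1 + pt i0 i1 0 1 0 + pt i0 i1 0 1 1 = 0 := by
  funext i
  simp only [Pi.add_apply, Pi.zero_apply]
  by_cases h0 : i = i0
  · rw [h0]
    simp only [pt_apply_i0]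
    decide
  · by_cases h1 : i = i1
    · rw [h1]
      simp only [pt_apply_i1 i0 i1 h01]
      decide
    · simp only [pt_apply_other i0 i1 _ _ _ h0 h1, Pi.zero_apply]
      decide

lemma pair_mem_fib (h01 : i0 ≠ i1) {z : Fin m → ZMod 2} (hz : z ∈ Blk i0 i1) (a b : ZMod 2) :
    ∀ x ∈ ({pt i0 i1 z 0 0, pt i0 i1 z a b} : Finset (Fin m → ZMod 2)), proj i0 i1 x = z := by
  intro x hx
  simp only [Finset.mem_insert, Finset.mem_singleton] at hx
  rcases hx with h | h <;> (subst h; exact proj_pt i0 i1 hz _ _)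

end construction

lemma exists_zero_sum_finset {m : ℕ} (hm : 2 ≤ m) (w : ℕ) (hweven : Even w) (hle : w ≤ 2 ^ m)
    (hw2 : w ≠ 2) (hw2' : w ≠ 2 ^ m - 2) :
    ∃ E : Finset (Fin m → ZMod 2), E.card = w ∧ ∑ x ∈ E, x = 0 := by
  have hweven' := Nat.even_iff.mp hweven
  set i0 : Fin m := ⟨0, by omega⟩ with hi0
  set i1 : Fin m := ⟨1, by omega⟩ with hi1
  have h01 : i0 ≠ i1 := fun h => by simpa [hi0, hi1] using congrArg Fin.val h
  have hB := card_Blk i0 i1 hm h01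
  have hpow : 2 ^ m = 4 * 2 ^ (m - 2) := by
    have h : m - 2 + 2 = m := by omega
    conv_lhs => rw [← h]
    rw [pow_add]
    ring
  by_cases h4 : w % 4 = 0
  · obtain ⟨Z, hZB, hZcard⟩ := Finset.exists_subset_card_eq (s := (Blk i0 i1)) (n := (w / 4)) (by omega)
    have hfib : ∀ z ∈ Z, ∀ x ∈ blk i0 i1 z, proj i0 i1 x = z :=
      fun z hz => blk_fib i0 i1 (hZB hz)
    refine ⟨Z.biUnion (blk i0 i1), ?_, ?_⟩
    · rw [card_biUnion_fib i0 i1 hfib,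
        Finset.sum_congr rfl fun z _ => card_blk i0 i1 h01 z, Finset.sum_const, smul_eq_mul,
        hZcard]
      omega
    · rw [sum_biUnion_fib i0 i1 hfib,
        Finset.sum_congr rfl fun z _ => sum_blk i0 i1 h01 z]
      simp
  · have h42 : w % 4 = 2 := by omega
    have hle' : w ≤ 2 ^ m - 6 := by omega
    have hw6 : 6 ≤ w := by omega
    set k := (w - 6) / 4 with hkdef
    have hk : w = 4 * k + 6 := by omega
    have hk3 : k + 3 ≤ 2 ^ (m - 2) := by omega
    obtain ⟨Z', hZ'B, hZ'card⟩ := Finset.exists_subset_card_eq (s := (Blk i0 i1)) (n := (k + 3)) (by omega)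
    obtain ⟨S, hSZ', hScard⟩ := Finset.exists_subset_card_eq (s := Z') (n := 3) (by omega)
    obtain ⟨z1, z2, z3, h12, h13, h23, hS⟩ := Finset.card_eq_three.mp hScard
    classical
    set F : (Fin m → ZMod 2) → Finset (Fin m → ZMod 2) := fun z =>
      if z = z1 then {pt i0 i1 z1 0 0, pt i0 i1 z1 0 1}
      else if z = z2 then {pt i0 i1 z2 0 0, pt i0 i1 z2 1 0}
      else if z = z3 then {pt i0 i1 z3 0 0, pt i0 i1 z3 1 1}
      else blk i0 i1 z with hF
    have hz1B : z1 ∈ Blk i0 i1 := hZ'B (hSZ' (by rw [hS]; simp))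
    have hz2B : z2 ∈ Blk i0 i1 := hZ'B (hSZ' (by rw [hS]; simp))
    have hz3B : z3 ∈ Blk i0 i1 := hZ'B (hSZ' (by rw [hS]; simp))
    have hfib : ∀ z ∈ Z', ∀ x ∈ F z, proj i0 i1 x = z := by
      intro z hz x hx
      have hzB : z ∈ Blk i0 i1 := hZ'B hz
      rw [hF] at hx
      simp only at hx
      split_ifs at hx with e1 e2 e3
      · subst e1; exact pair_mem_fib i0 i1 h01 hzB _ _ x hx
      · subst e2; exact pair_mem_fib i0 i1 h01 hzB _ _ x hx
      · subst e3; exact pair_mem_fib i0 i1 h01 hzB _ _ x hx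
      · exact blk_fib i0 i1 hzB x hx
    have hFz1 : F z1 = {pt i0 i1 z1 0 0, pt i0 i1 z1 0 1} := by rw [hF]; simp
    have hFz2 : F z2 = {pt i0 i1 z2 0 0, pt i0 i1 z2 1 0} := by
      rw [hF]; simp [Ne.symm h12]
    have hFz3 : F z3 = {pt i0 i1 z3 0 0, pt i0 i1 z3 1 1} := by
      rw [hF]; simp [Ne.symm h13, Ne.symm h23]
    have hFblk : ∀ z ∈ Z' \ S, F z = blk i0 i1 z := by
      intro z hz
      rw [Finset.mem_sdiff, hS] at hz
      simp only [Finset.mem_insert, Finset.mem_singleton] at hz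
      push_neg at hz
      rw [hF]
      simp [hz.2.1, hz.2.2.1, hz.2.2.2]
    have hcardS : (Z' \ S).card = k := by
      rw [Finset.card_sdiff_of_subset hSZ', hScard, hZ'card]
      omega
    have hsum3 : ∑ z ∈ S, (F z).card = 6 := by
      rw [hS, Finset.sum_insert (by simp [h12, h13]), Finset.sum_insert (by simp [h23]),
        Finset.sum_singleton, hFz1, hFz2, hFz3,
        card_pair_pt i0 i1 h01 z1 (Or.inr one_ne_zero),
        card_pair_pt i0 i1 h01 z2 (Or.inl one_ne_zero),
        card_pair_pt i0 i1 h01 z3 (Or.inl one_ne_zero)]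
      norm_num
    refine ⟨Z'.biUnion F, ?_, ?_⟩
    · rw [card_biUnion_fib i0 i1 hfib, ← Finset.sum_sdiff hSZ', hsum3,
        Finset.sum_congr rfl (fun z hz => by rw [hFblk z hz, card_blk i0 i1 h01]),
        Finset.sum_const, smul_eq_mul, hcardS]
      omega
    · rw [sum_biUnion_fib i0 i1 hfib, ← Finset.sum_sdiff hSZ',
        Finset.sum_congr rfl (fun z hz => by rw [hFblk z hz, sum_blk i0 i1 h01]),
        Finset.sum_const, smul_zero, zero_add, hS,
        Finset.sum_insert (by simp [h12, h13]), Finset.sum_insert (by simp [h23]),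
        Finset.sum_singleton, hFz1, hFz2, hFz3,
        sum_pair_pt i0 i1 h01 z1 (Or.inr one_ne_zero),
        sum_pair_pt i0 i1 h01 z2 (Or.inl one_ne_zero),
        sum_pair_pt i0 i1 h01 z3 (Or.inl one_ne_zero)]
      rw [← add_assoc]
      exact three_delta i0 i1 h01


lemma wt_indicator {m : ℕ} (E : Finset (Fin m → ZMod 2)) :
    wt (fun x => if x ∈ E then (1 : ZMod 2) else 0) = E.card := by
  rw [wt_eq_card_filter]
  congr 1
  ext x
  simp only [Finset.mem_filter, Finset.mem_univ, true_and]
  by_cases h : x ∈ E <;> simp [h]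

theorem spec_RM_m_sub_2 (m : ℕ) (hm : 2 ≤ m) :
    spec (m - 2) m = {w | Even w ∧ w ≤ 2 ^ m} \ {2, 2 ^ m - 2} := by
  ext w
  simp only [spec, Set.mem_diff, Set.mem_setOf_eq, Set.mem_insert_iff, Set.mem_singleton_iff]
  constructor
  · rintro ⟨f, hf, rfl⟩
    refine ⟨⟨wt_even hm hf, wt_le f⟩, ?_⟩
    push_neg
    exact wt_ne hm hf
  · rintro ⟨⟨hweven, hle⟩, hne⟩
    push_neg at hne
    obtain ⟨E, hEcard, hEsum⟩ := exists_zero_sum_finset hm w hweven hle hne.1 hne.2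
    refine ⟨fun x => if x ∈ E then 1 else 0, ?_, by rw [wt_indicator, hEcard]⟩
    refine mem_RM_of_checks hm _ ?_ ?_
    · rw [Finset.sum_ite_mem, Finset.univ_inter, Finset.sum_const, nsmul_eq_mul, mul_one]
      rw [ZMod.natCast_eq_zero_iff, hEcard]
      exact hweven.two_dvd
    · intro j
      have : ∀ x : Fin m → ZMod 2, (if x ∈ E then (1:ZMod 2) else 0) * x j
          = if x ∈ E then x j else 0 := by
        intro x
        by_cases h : x ∈ E <;> simp [h]
      rw [Finset.sum_congr rfl fun x _ => this x, Finset.sum_ite_mem, Finset.univ_inter]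
      calc ∑ x ∈ E, x j = (∑ x ∈ E, x) j := by rw [Finset.sum_apply]
        _ = 0 := by rw [hEsum]; rfl
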